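/- arXiv:1310.2959 — 2 statements merged into one kernel-verified Lean document; each statement's English description precedes it below -/
import Mathlib

section
/- (Skewed-vector count-min bound; cf. Lemma of Cormode–Muthukrishnan, Eqn 5.1.) Fix positive integers n, w, d, a probability space Ω, and random hash functions h_1, …, h_d : Ω → (Fin n → Fin w) that are mutually independent, each pairwise uniform in the sense that for all distinct i, i', P(h_j(i) = h_j(i')) ≤ 1/w. Let y ∈ ℝ^n have nonnegative entries, let T ⊆ Fin n be a set of at most k coordinates containing the k largest entries of y, and let t_k = Σ_{i' ∉ T} y_{i'} be the tail weight. Let η > 0, and let ŷ_i = min_{1 ≤ j ≤ d} S(y)_{j, h_j(i)} be the count-min estimate of coordinate i. If w ≥ 3k and w ≥ e/η, then for each coordinate i, P( ŷ_i ≤ y_i + η·t_k ) ≥ 1 − (1/3 + 1/e)^d. -/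
open Finset MeasureTheory ProbabilityTheory
open scoped ENNReal

/-- The count-min sketch of width `w` and depth `d` for `y : Fin n → ℝ`. -/
noncomputable def cmSketch {n w d : ℕ} (h : Fin d → Fin n → Fin w)
    (y : Fin n → ℝ) (j : Fin d) (c : Fin w) : ℝ :=
  ∑ i ∈ Finset.univ.filter (fun i => h j i = c), y i

/-- The count-min estimate of coordinate `i`: `ŷ_i = min_j S(y)_{j, h j i}`. -/
noncomputable def cmEstimate {n w d : ℕ} (hd : 0 < d) (h : Fin d → Fin n → Fin w)
    (y : Fin n → ℝ) (i : Fin n) : ℝ :=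
  Finset.univ.inf' ⟨⟨0, hd⟩, Finset.mem_univ _⟩ (fun j => cmSketch h y j (h j i))

/-- Single-row bound for the count-min sketch. -/
lemma cm_row_bound {n w : ℕ} (hw : 0 < w)
    {Ω : Type*} [MeasureSpace Ω] [IsProbabilityMeasure (ℙ : Measure Ω)]
    (f : Ω → Fin n → Fin w) (hf : Measurable f)
    (hpair : ∀ i i' : Fin n, i ≠ i' → ℙ {ω | f ω i = f ω i'} ≤ 1 / w)
    (y : Fin n → ℝ) (hy : ∀ i, 0 ≤ y i)
    (k : ℕ) (T : Finset (Fin n)) (hTcard : T.card ≤ k)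
    (η : ℝ) (hη : 0 < η) (hw3k : 3 * k ≤ w) (hwη : Real.exp 1 / η ≤ w)
    (i : Fin n) :
    ℙ {ω | ¬ (∑ i' ∈ Finset.univ.filter (fun i' => f ω i' = f ω i), y i'
        ≤ y i + η * ∑ i' ∈ Finset.univ.filter (fun i' => i' ∉ T), y i')}
      ≤ ENNReal.ofReal (1/3 + 1/Real.exp 1) := by
  classical
  have hwR : (0:ℝ) < w := by exact_mod_cast hw
  set tk : ℝ := ∑ i' ∈ Finset.univ.filter (fun i' => i' ∉ T), y i' with htk
  have htk0 : 0 ≤ tk := Finset.sum_nonneg fun _ _ => hy _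
  set U : Finset (Fin n) := Finset.univ.filter (fun i' => i' ∉ T ∧ i' ≠ i) with hU
  set E : Fin n → Set Ω := fun i' => {ω | f ω i' = f ω i} with hE
  have hEmeas : ∀ i', MeasurableSet (E i') := by
    intro i'
    have he : E i' = f ⁻¹' {g | g i' = g i} := rfl
    rw [he]
    exact hf ((Set.toFinite _).measurableSet)
  set tail : Ω → ℝ := fun ω => ∑ i' ∈ U, (if f ω i' = f ω i then y i' else 0) with htail
  set H : Set Ω := ⋃ i' ∈ T.erase i, E i' with hH
  set C : Set Ω := {ω | η * tk < tail ω} with hC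
  have hsub : {ω | ¬ (∑ i' ∈ Finset.univ.filter (fun i' => f ω i' = f ω i), y i'
      ≤ y i + η * tk)} ⊆ H ∪ C := by
    intro ω hω
    by_contra hω'
    simp only [Set.mem_union, not_or] at hω'
    obtain ⟨hωH, hωC⟩ := hω'
    have hHne : ∀ i' ∈ T.erase i, ¬ (f ω i' = f ω i) := by
      intro i' hi' hcol
      exact hωH (Set.mem_biUnion hi' hcol)
    have hCle : tail ω ≤ η * tk := not_lt.mp (by simpa [hC] using hωC)
    apply hω
    have hsubF : Finset.univ.filter (fun i' => f ω i' = f ω i)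
        ⊆ insert i (U.filter (fun i' => f ω i' = f ω i)) := by
      intro i'' hi''
      simp only [Finset.mem_filter, Finset.mem_univ, true_and] at hi''
      by_cases hii : i'' = i
      · simp [hii]
      · by_cases hiT : i'' ∈ T
        · exact absurd hi'' (hHne i'' (Finset.mem_erase.mpr ⟨hii, hiT⟩))
        · simp [Finset.mem_insert, hU, Finset.mem_filter, hiT, hii, hi'']
    have hiU : i ∉ U.filter (fun i' => f ω i' = f ω i) := by
      simp [hU, Finset.mem_filter]
    calc ∑ i' ∈ Finset.univ.filter (fun i' => f ω i' = f ω i), y i'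
        ≤ ∑ i' ∈ insert i (U.filter (fun i' => f ω i' = f ω i)), y i' :=
          Finset.sum_le_sum_of_subset_of_nonneg hsubF (fun _ _ _ => hy _)
      _ = y i + ∑ i' ∈ U.filter (fun i' => f ω i' = f ω i), y i' :=
          Finset.sum_insert hiU
      _ = y i + tail ω := by rw [htail]; simp [Finset.sum_filter]
      _ ≤ y i + η * tk := by linarith
  have hHle : ℙ H ≤ ENNReal.ofReal (1/3) := by
    have h1 : ℙ H ≤ ∑ i' ∈ T.erase i, ℙ (E i') := measure_biUnion_finset_le _ _
    have h2 : ∑ i' ∈ T.erase i, ℙ (E i') ≤ ∑ _i' ∈ T.erase i, (1 / w : ℝ≥0∞) :=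
      Finset.sum_le_sum fun i' hi' => hpair i' i (Finset.ne_of_mem_erase hi')
    have h3 : (∑ _i' ∈ T.erase i, (1 / w : ℝ≥0∞)) = ((T.erase i).card : ℝ≥0∞) * (1/w) := by
      rw [Finset.sum_const, nsmul_eq_mul]
    have hcard : (T.erase i).card ≤ k := le_trans (Finset.card_erase_le) hTcard
    have key : ((T.erase i).card : ℝ≥0∞) * (1/w) ≤ ENNReal.ofReal (1/3) := by
      calc ((T.erase i).card : ℝ≥0∞) * (1/w) ≤ (k : ℝ≥0∞) * (1/w) := by
            gcongr <;> exact_mod_cast hcard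
        _ = ENNReal.ofReal ((k:ℝ) * (1/w)) := by
            rw [ENNReal.ofReal_mul (by positivity), ENNReal.ofReal_natCast,
              ENNReal.ofReal_div_of_pos hwR, ENNReal.ofReal_one, ENNReal.ofReal_natCast]
        _ ≤ ENNReal.ofReal (1/3) := by
            apply ENNReal.ofReal_le_ofReal
            rw [mul_one_div, div_le_div_iff₀ hwR (by norm_num)]
            have h3k : (3:ℝ) * k ≤ w := by exact_mod_cast hw3k
            linarith
    exact le_trans h1 (le_trans h2 (le_trans (le_of_eq h3) key))
  have htailm : Measurable tail := by
    apply Finset.measurable_sum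
    intro i' _
    exact Measurable.ite (hEmeas i') measurable_const measurable_const
  have hCle : ℙ C ≤ ENNReal.ofReal (1/Real.exp 1) := by
    rcases eq_or_lt_of_le htk0 with htkz | htkpos
    · have : C = ∅ := by
        ext ω
        simp only [hC, Set.mem_setOf_eq, Set.mem_empty_iff_false, iff_false, not_lt]
        have hyz : ∀ i' ∉ T, y i' = 0 := by
          intro i' hi'
          have := (Finset.sum_eq_zero_iff_of_nonneg
            (fun i'' _ => hy i'')).mp htkz.symm i' (by simp [hi'])
          exact this
        have : tail ω = 0 := by
          rw [htail]
          apply Finset.sum_eq_zero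
          intro i'' hi''
          have h0 : y i'' = 0 := hyz i'' ((Finset.mem_filter.mp hi'').2.1)
          simp [h0]
        rw [this, ← htkz]
        simp
      rw [this]
      simp
    · -- Markov
      have hgeq : ∀ ω, ENNReal.ofReal (tail ω)
          = ∑ i' ∈ U, Set.indicator (E i') (fun _ => ENNReal.ofReal (y i')) ω := by
        intro ω
        rw [htail, ENNReal.ofReal_sum_of_nonneg
          (fun i' _ => by by_cases hc : f ω i' = f ω i <;> simp [hc, hy i'])]
        refine Finset.sum_congr rfl fun i' _ => ?_
        by_cases hc : f ω i' = f ω i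
        · have : ω ∈ E i' := hc
          simp [Set.indicator_of_mem this, hc]
        · have : ω ∉ E i' := hc
          simp [Set.indicator_of_notMem this, hc]
      have hint : ∫⁻ ω, ENNReal.ofReal (tail ω) ∂ℙ ≤ ENNReal.ofReal (tk / w) := by
        calc ∫⁻ ω, ENNReal.ofReal (tail ω) ∂ℙ
            = ∑ i' ∈ U, ∫⁻ ω, Set.indicator (E i') (fun _ => ENNReal.ofReal (y i')) ω ∂ℙ := by
              simp_rw [hgeq]
              exact lintegral_finset_sum _
                (fun i' _ => measurable_const.indicator (hEmeas i'))
          _ = ∑ i' ∈ U, ENNReal.ofReal (y i') * ℙ (E i') := by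
              refine Finset.sum_congr rfl fun i' _ => ?_
              rw [lintegral_indicator_const (hEmeas i')]
          _ ≤ ∑ i' ∈ U, ENNReal.ofReal (y i') * (1/w) := by
              refine Finset.sum_le_sum fun i' hi' => ?_
              have hii : i' ≠ i := (Finset.mem_filter.mp hi').2.2
              exact mul_le_mul_right (hpair i' i hii) _
          _ = ENNReal.ofReal (∑ i' ∈ U, y i') * (1/w) := by
              rw [← Finset.sum_mul, ENNReal.ofReal_sum_of_nonneg (fun i' _ => hy i')]
          _ ≤ ENNReal.ofReal tk * (1/w) := by
              gcongr
              apply Finset.sum_le_sum_of_subset_of_nonneg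
              · intro x hx
                simp only [hU, Finset.mem_filter, Finset.mem_univ, true_and] at hx ⊢
                exact hx.1
              · exact fun _ _ _ => hy _
          _ = ENNReal.ofReal (tk / w) := by
              rw [mul_one_div, ENNReal.ofReal_div_of_pos hwR, ENNReal.ofReal_natCast]
      have hCsub : C ⊆ {ω | ENNReal.ofReal (η * tk) ≤ ENNReal.ofReal (tail ω)} :=
        fun ω hω => ENNReal.ofReal_le_ofReal (le_of_lt hω)
      have hmk := mul_meas_ge_le_lintegral₀ (μ := ℙ)
        (f := fun ω => ENNReal.ofReal (tail ω))
        (ENNReal.measurable_ofReal.comp htailm).aemeasurable (ENNReal.ofReal (η * tk))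
      have hmain : ENNReal.ofReal (η * tk) * ℙ C ≤ ENNReal.ofReal (tk / w) :=
        le_trans (mul_le_mul_right (measure_mono hCsub) _) (le_trans hmk hint)
      have hηtk : 0 < η * tk := mul_pos hη htkpos
      have h0 : (ENNReal.ofReal (η*tk)) ≠ 0 := by
        simp [ENNReal.ofReal_eq_zero, not_le, hηtk]
      have hdiv : ℙ C ≤ ENNReal.ofReal (tk / w) / ENNReal.ofReal (η * tk) := by
        rw [ENNReal.le_div_iff_mul_le (Or.inl h0) (Or.inl ENNReal.ofReal_ne_top)]
        rw [mul_comm]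
        exact hmain
      refine le_trans hdiv ?_
      rw [← ENNReal.ofReal_div_of_pos hηtk]
      apply ENNReal.ofReal_le_ofReal
      have heq : tk / ↑w / (η * tk) = 1 / (↑w * η) := by
        field_simp
      rw [heq]
      apply one_div_le_one_div_of_le (Real.exp_pos 1)
      calc Real.exp 1 = (Real.exp 1 / η) * η := by field_simp
        _ ≤ ↑w * η := by
          apply mul_le_mul_of_nonneg_right hwη (le_of_lt hη)
  calc ℙ {ω | ¬ (∑ i' ∈ Finset.univ.filter (fun i' => f ω i' = f ω i), y i'
        ≤ y i + η * tk)}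
      ≤ ℙ (H ∪ C) := measure_mono hsub
    _ ≤ ℙ H + ℙ C := measure_union_le _ _
    _ ≤ ENNReal.ofReal (1/3) + ENNReal.ofReal (1/Real.exp 1) := add_le_add hHle hCle
    _ = ENNReal.ofReal (1/3 + 1/Real.exp 1) :=
        (ENNReal.ofReal_add (by norm_num) (by positivity)).symm

/-- Skewed-vector count-min bound (cf. Cormode–Muthukrishnan, Eqn 5.1): if `T`
contains the `k` largest entries of a nonnegative vector `y`, with tail weight
`t_k = ∑_{i' ∉ T} y i'`, and `w ≥ 3k`, `w ≥ e/η`, then for each coordinate `i`,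
`ŷ_i ≤ y_i + η t_k` with probability at least `1 - (1/3 + 1/e)^d`. -/
theorem cm_skewed_bound
    (n w d : ℕ) (hn : 0 < n) (hw : 0 < w) (hd : 0 < d)
    {Ω : Type*} [MeasureSpace Ω] [IsProbabilityMeasure (ℙ : Measure Ω)]
    (h : Fin d → Ω → Fin n → Fin w) (hmeas : ∀ j, Measurable (h j))
    (hindep : iIndepFun h ℙ)
    (hpair : ∀ (j : Fin d) (i i' : Fin n), i ≠ i' →
        ℙ {ω | h j ω i = h j ω i'} ≤ 1 / w)
    (y : Fin n → ℝ) (hy : ∀ i, 0 ≤ y i)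
    (k : ℕ) (T : Finset (Fin n)) (hTcard : T.card ≤ k)
    (hTtop : ∀ i ∈ T, ∀ i' ∉ T, y i' ≤ y i)
    (η : ℝ) (hη : 0 < η)
    (hw3k : 3 * k ≤ w) (hwη : Real.exp 1 / η ≤ w) (i : Fin n) :
    1 - ENNReal.ofReal ((1 / 3 + 1 / Real.exp 1) ^ d) ≤
      ℙ {ω | cmEstimate hd (fun j => h j ω) y i
              ≤ y i + η * ∑ i' ∈ Finset.univ.filter (fun i' => i' ∉ T), y i'} := by
  classical
  set v : ℝ := y i + η * ∑ i' ∈ Finset.univ.filter (fun i' => i' ∉ T), y i' with hv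
  set A : Set (Fin n → Fin w) :=
    {g | ¬ (∑ i' ∈ Finset.univ.filter (fun i' => g i' = g i), y i' ≤ v)} with hA
  have hAmeas : MeasurableSet A := (Set.toFinite A).measurableSet
  have hrow : ∀ j, ℙ (h j ⁻¹' A) ≤ ENNReal.ofReal (1/3 + 1/Real.exp 1) := by
    intro j
    exact cm_row_bound hw (h j) (hmeas j) (fun i i' hii => hpair j i i' hii)
      y hy k T hTcard η hη hw3k hwη i
  have hGood : {ω | cmEstimate hd (fun j => h j ω) y i ≤ v} = ⋃ j, (h j ⁻¹' A)ᶜ := by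
    ext ω
    simp only [Set.mem_setOf_eq, cmEstimate, Finset.inf'_le_iff, Finset.mem_univ, true_and,
      Set.mem_iUnion, Set.mem_compl_iff, Set.mem_preimage, hA, Set.mem_setOf_eq, not_not,
      cmSketch]
    exact Iff.trans (Finset.inf'_le_iff _) (by simp)
  have hCompl : {ω | cmEstimate hd (fun j => h j ω) y i ≤ v}ᶜ = ⋂ j, h j ⁻¹' A := by
    rw [hGood, Set.compl_iUnion]
    simp
  have hmeasGood : MeasurableSet {ω | cmEstimate hd (fun j => h j ω) y i ≤ v} := by
    rw [hGood]
    exact MeasurableSet.iUnion fun j => ((hmeas j) hAmeas).compl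
  have hprod : ℙ (⋂ j, h j ⁻¹' A) = ∏ j : Fin d, ℙ (h j ⁻¹' A) := by
    have := (iIndepFun_iff_measure_inter_preimage_eq_mul.mp hindep) Finset.univ
      (sets := fun _ => A) (fun j _ => hAmeas)
    simpa using this
  have hbad : ℙ (⋂ j, h j ⁻¹' A) ≤ ENNReal.ofReal ((1/3 + 1/Real.exp 1)^d) := by
    rw [hprod, ENNReal.ofReal_pow (by positivity)]
    calc ∏ j : Fin d, ℙ (h j ⁻¹' A)
        ≤ ∏ _j : Fin d, ENNReal.ofReal (1/3 + 1/Real.exp 1) :=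
          Finset.prod_le_prod' (fun j _ => hrow j)
      _ = ENNReal.ofReal (1/3 + 1/Real.exp 1) ^ d := by
          rw [Finset.prod_const, Finset.card_univ, Fintype.card_fin]
  refine tsub_le_iff_right.mpr ?_
  calc (1:ℝ≥0∞) = ℙ {ω | cmEstimate hd (fun j => h j ω) y i ≤ v}
        + ℙ {ω | cmEstimate hd (fun j => h j ω) y i ≤ v}ᶜ := by
        rw [measure_add_measure_compl hmeasGood, measure_univ]
    _ ≤ ℙ {ω | cmEstimate hd (fun j => h j ω) y i ≤ v}
        + ENNReal.ofReal ((1/3 + 1/Real.exp 1)^d) := by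
        gcongr
        rw [hCompl]
        exact hbad
end

section
/- (Count-min bound for Zipf-like vectors; cf. Theorem 3 and its Corollary.) Fix positive integers n, w, d, a probability space Ω, and random hash functions h_1, …, h_d : Ω → (Fin n → Fin w) that are mutually independent, each pairwise uniform in the sense that for all distinct i, i', P(h_j(i) = h_j(i')) ≤ 1/w. Let y ∈ ℝ^n have nonnegative entries whose i-th largest value is at most C·i^{−z} for constants C > 0 and z > 1. Fix a positive integer k ≤ n, let T be a set of k coordinates containing the k largest entries of y, and let η > 0. Then the tail weight satisfies t_k = Σ_{i' ∉ T} y_{i'} ≤ C·k^{1−z}/(z−1), and if w ≥ 3k and w ≥ e/η, then for each coordinate i the count-min estimate ŷ_i = min_{1 ≤ j ≤ d} S(y)_{j, h_j(i)} satisfies P( ŷ_i ≤ y_i + η·C·k^{1−z}/(z−1) ) ≥ 1 − (1/3 + 1/e)^d. -/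
open Finset MeasureTheory ProbabilityTheory
open scoped ENNReal NNReal


lemma aux_sum_le_sum_of_card_eq {α : Type*} [DecidableEq α] {A B : Finset α} {f : α → ℝ}
    (hcard : A.card = B.card) (hle : ∀ a ∈ A, ∀ b ∈ B, f a ≤ f b) :
    ∑ a ∈ A, f a ≤ ∑ b ∈ B, f b := by
  let e : {x // x ∈ A} ≃ {x // x ∈ B} := A.equivOfCardEq hcard
  calc ∑ a ∈ A, f a = ∑ a ∈ A.attach, f a.1 := (Finset.sum_attach A f).symm
    _ ≤ ∑ a ∈ A.attach, f (e a).1 :=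
        Finset.sum_le_sum fun a _ => hle a.1 a.2 (e a).1 (e a).2
    _ = ∑ b ∈ B.attach, f b.1 := by
        rw [← Finset.univ_eq_attach, ← Finset.univ_eq_attach]
        exact Equiv.sum_comp e (fun b => f b.1)
    _ = ∑ b ∈ B, f b := Finset.sum_attach B f

lemma aux_rpow_tail (k n : ℕ) (hk : 0 < k) (z : ℝ) (hz : 1 < z) :
    ∑ m ∈ Finset.Ico k n, ((m : ℝ) + 1) ^ (-z) ≤ (k : ℝ) ^ (1 - z) / (z - 1) := by
  have hk1 : (1:ℝ) ≤ k := by exact_mod_cast hk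
  have hrhs : 0 ≤ (k : ℝ) ^ (1 - z) / (z - 1) := div_nonneg (Real.rpow_nonneg (by positivity) _) (by linarith)
  rcases le_or_gt n k with hnk | hkn
  · rw [Finset.Ico_eq_empty (by omega)]; simpa using hrhs
  have hanti : AntitoneOn (fun x : ℝ => x ^ (-z)) (Set.Icc (k:ℝ) n) := by
    intro a ha b hb hab
    exact Real.rpow_le_rpow_of_nonpos (lt_of_lt_of_le (by linarith) ha.1) hab
      (by linarith)
  have key := AntitoneOn.sum_le_integral_Ico (f := fun x : ℝ => x ^ (-z)) hkn.le hanti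
  have hint : ∫ x in (k:ℝ)..(n:ℝ), x ^ (-z)
      = ((n:ℝ) ^ (-z + 1) - (k:ℝ) ^ (-z + 1)) / (-z + 1) := by
    apply integral_rpow
    right
    constructor
    · intro hcon; linarith
    · intro hmem
      rw [Set.mem_uIcc] at hmem
      rcases hmem with ⟨h1, _⟩ | ⟨h1, _⟩ <;> nlinarith [hk1, (Nat.cast_le (α := ℝ)).2 hkn.le]
  have hsum : ∑ m ∈ Finset.Ico k n, ((m : ℝ) + 1) ^ (-z)
      = ∑ m ∈ Finset.Ico k n, (fun x : ℝ => x ^ (-z)) ((m + 1 : ℕ) : ℝ) := by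
    refine Finset.sum_congr rfl fun m _ => by push_cast; ring_nf
  rw [hsum]
  refine key.trans ?_
  rw [hint]
  have hn0 : (0:ℝ) ≤ (n:ℝ) ^ (-z+1) := Real.rpow_nonneg (by positivity) _
  have : ((n:ℝ) ^ (-z + 1) - (k:ℝ) ^ (-z + 1)) / (-z + 1)
      = ((k:ℝ) ^ (-z+1) - (n:ℝ) ^ (-z + 1)) / (z - 1) := by
    rw [div_eq_div_iff (by linarith) (by linarith)]; ring
  rw [this]
  have hzz : (-z + 1) = 1 - z := by ring
  rw [hzz] at this ⊢
  first
  | rw [this]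
  | skip
  have hn0' : (0:ℝ) ≤ (n:ℝ) ^ (1 - z) := Real.rpow_nonneg (by positivity) _
  have h2 : (k:ℝ) ^ (1-z) - (n:ℝ) ^ (1-z) ≤ (k:ℝ) ^ (1-z) := by linarith
  exact (div_le_div_iff_of_pos_right (by linarith)).mpr h2


lemma aux_tail_bound (n : ℕ) (y : Fin n → ℝ) (C z : ℝ) (hC : 0 < C) (hz : 1 < z)
    (σ : Equiv.Perm (Fin n))
    (hzipf : ∀ i : Fin n, y (σ i) ≤ C * (((i : ℕ) + 1 : ℝ)) ^ (-z))
    (k : ℕ) (hk : 0 < k) (hkn : k ≤ n)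
    (T : Finset (Fin n)) (hTcard : T.card = k)
    (hTtop : ∀ i ∈ T, ∀ i' ∉ T, y i' ≤ y i) :
    (∑ i' ∈ Finset.univ.filter (fun i' => i' ∉ T), y i') ≤ C * (k : ℝ) ^ (1 - z) / (z - 1) := by
  classical
  set K : Finset (Fin n) := Finset.univ.filter (fun m => (m : ℕ) < k) with hK
  set T' : Finset (Fin n) := T.image σ.symm with hT'
  have hT'card : T'.card = k := by
    rw [hT', Finset.card_image_of_injective _ σ.symm.injective, hTcard]
  have hKcard : K.card = k := by
    rw [show k = (Finset.range k).card from (Finset.card_range k).symm]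
    apply Finset.card_nbij' (fun m : Fin n => (m : ℕ))
      (fun b => if hb : b < n then (⟨b, hb⟩ : Fin n) else ⟨0, by omega⟩)
    · intro a ha; simp [hK] at ha ⊢; exact ha
    · intro b hb
      simp only [Finset.coe_range, Set.mem_Iio] at hb
      dsimp only
      rw [dif_pos (by omega : b < n)]
      simp [hK]; omega
    · intro a _
      dsimp only
      rw [dif_pos a.isLt]
    · intro b hb
      simp only [Finset.coe_range, Set.mem_Iio] at hb
      dsimp only
      rw [dif_pos (by omega : b < n)]
  have hmemT' : ∀ b, b ∈ T' ↔ σ b ∈ T := by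
    intro b
    simp only [hT', Finset.mem_image]
    constructor
    · rintro ⟨i, hi, rfl⟩; simpa using hi
    · intro hb; exact ⟨σ b, hb, by simp⟩
  have hcardeq : (K \ T').card = (T' \ K).card := by
    have h1 := Finset.card_sdiff_add_card_inter K T'
    have h2 := Finset.card_sdiff_add_card_inter T' K
    rw [Finset.inter_comm] at h2
    omega
  have hstep : ∑ m ∈ K \ T', y (σ m) ≤ ∑ m ∈ T' \ K, y (σ m) := by
    apply aux_sum_le_sum_of_card_eq hcardeq
    intro a ha b hb
    apply hTtop (σ b) ((hmemT' b).1 (Finset.mem_sdiff.1 hb).1) (σ a)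
    intro hcon
    exact (Finset.mem_sdiff.1 ha).2 ((hmemT' a).2 hcon)
  have hKT : ∑ m ∈ K, y (σ m) ≤ ∑ i' ∈ T, y i' := by
    have hTsum : ∑ i' ∈ T, y i' = ∑ m ∈ T', y (σ m) := by
      rw [hT', Finset.sum_image (fun x _ y _ h => σ.symm.injective h)]
      exact Finset.sum_congr rfl fun x _ => by simp
    have e1 := Finset.sum_inter_add_sum_sdiff K T' (fun m => y (σ m))
    have e2 := Finset.sum_inter_add_sum_sdiff T' K (fun m => y (σ m))
    rw [Finset.inter_comm] at e2
    rw [hTsum]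
    linarith [hstep]
  have htail : ∑ m ∈ Finset.univ \ K, y (σ m) ≤ C * ((k:ℝ) ^ (1-z) / (z-1)) := by
    have h1 : ∑ m ∈ Finset.univ \ K, y (σ m)
        ≤ ∑ m ∈ Finset.univ \ K, C * (((m:ℕ):ℝ) + 1) ^ (-z) :=
      Finset.sum_le_sum fun m _ => hzipf m
    refine h1.trans ?_
    have h2 : ∑ m ∈ Finset.univ \ K, C * (((m:ℕ):ℝ) + 1) ^ (-z)
        = ∑ m ∈ Finset.Ico k n, C * ((m:ℝ) + 1) ^ (-z) := by
      have hset : Finset.univ \ K = Finset.univ.filter (fun m : Fin n => ¬ (m:ℕ) < k) := by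
        ext a; simp [hK]
      rw [hset, Finset.sum_filter,
        Fin.sum_univ_eq_sum_range (fun m => if ¬ m < k then C * ((m:ℝ)+1) ^ (-z) else 0) n,
        ← Finset.sum_filter]
      congr 1
      ext a
      simp only [Finset.mem_Ico, Finset.mem_filter, Finset.mem_range, not_lt]
      omega
    rw [h2, ← Finset.mul_sum]
    exact mul_le_mul_of_nonneg_left (aux_rpow_tail k n hk z hz) hC.le
  have hsplit1 : ∑ i' ∈ Finset.univ.filter (fun i' => i' ∈ T), y i'
      + ∑ i' ∈ Finset.univ.filter (fun i' => i' ∉ T), y i' = ∑ i', y i' :=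
    Finset.sum_filter_add_sum_filter_not Finset.univ (fun i' => i' ∈ T) y
  have hTfilt : Finset.univ.filter (fun i' => i' ∈ T) = T := by
    ext a; simp
  rw [hTfilt] at hsplit1
  have hsplit2 : ∑ m ∈ Finset.univ \ K, y (σ m) + ∑ m ∈ K, y (σ m) = ∑ m : Fin n, y (σ m) :=
    Finset.sum_sdiff (Finset.subset_univ K)
  have hperm : (∑ i', y i') = ∑ m : Fin n, y (σ m) := (Equiv.sum_comp σ y).symm
  have hass : C * ((k:ℝ) ^ (1-z) / (z-1)) = C * (k:ℝ) ^ (1-z) / (z-1) := by ring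
  linarith [hKT, htail, hsplit1, hsplit2, hperm]

/-- Count-min bound for Zipf-like vectors: if the `i`-th largest entry of the
nonnegative vector `y` is at most `C i^{-z}` with `z > 1`, and `T` is a set of
`k` coordinates containing the `k` largest entries, then the tail weight is at
most `C k^{1-z}/(z-1)`, and for `w ≥ 3k`, `w ≥ e/η`, each count-min estimate
satisfies `ŷ_i ≤ y_i + η C k^{1-z}/(z-1)` with probability at least
`1 - (1/3 + 1/e)^d`. -/
theorem cm_zipf_bound
    (n w d : ℕ) (hn : 0 < n) (hw : 0 < w) (hd : 0 < d)
    {Ω : Type*} [MeasureSpace Ω] [IsProbabilityMeasure (ℙ : Measure Ω)]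
    (h : Fin d → Ω → Fin n → Fin w) (hmeas : ∀ j, Measurable (h j))
    (hindep : iIndepFun h ℙ)
    (hpair : ∀ (j : Fin d) (i i' : Fin n), i ≠ i' →
        ℙ {ω | h j ω i = h j ω i'} ≤ 1 / w)
    (y : Fin n → ℝ) (hy : ∀ i, 0 ≤ y i)
    (C z : ℝ) (hC : 0 < C) (hz : 1 < z)
    (σ : Equiv.Perm (Fin n)) (hσ : Antitone (fun i => y (σ i)))
    (hzipf : ∀ i : Fin n, y (σ i) ≤ C * (((i : ℕ) + 1 : ℝ)) ^ (-z))
    (k : ℕ) (hk : 0 < k) (hkn : k ≤ n)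
    (T : Finset (Fin n)) (hTcard : T.card = k)
    (hTtop : ∀ i ∈ T, ∀ i' ∉ T, y i' ≤ y i)
    (η : ℝ) (hη : 0 < η)
    (hw3k : 3 * k ≤ w) (hwη : Real.exp 1 / η ≤ w) :
    (∑ i' ∈ Finset.univ.filter (fun i' => i' ∉ T), y i')
        ≤ C * (k : ℝ) ^ (1 - z) / (z - 1) ∧
    ∀ i : Fin n,
      1 - ENNReal.ofReal ((1 / 3 + 1 / Real.exp 1) ^ d) ≤
        ℙ {ω | cmEstimate hd (fun j => h j ω) y i
                ≤ y i + η * (C * (k : ℝ) ^ (1 - z) / (z - 1))} := by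
  classical
  have h1 : (∑ i' ∈ Finset.univ.filter (fun i' => i' ∉ T), y i')
      ≤ C * (k : ℝ) ^ (1 - z) / (z - 1) :=
    aux_tail_bound n y C z hC hz σ hzipf k hk hkn T hTcard hTtop
  refine ⟨h1, ?_⟩
  intro i
  set B : ℝ := C * (k : ℝ) ^ (1 - z) / (z - 1) with hBdef
  have hkpos : (0:ℝ) < (k:ℝ) := by exact_mod_cast hk
  have hB : 0 < B := by
    apply div_pos (mul_pos hC (Real.rpow_pos_of_pos hkpos _)) (by linarith)
  have hηB : 0 < η * B := mul_pos hη hB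
  set R : Finset (Fin n) := Finset.univ.filter (fun i' => i' ∉ T ∧ i' ≠ i) with hR
  set badSet : Set (Fin n → Fin w) :=
    {g | (∃ i' ∈ T.erase i, g i' = g i) ∨
      η * B < ∑ i' ∈ R.filter (fun i' => g i' = g i), y i'} with hbadSet
  set Bad : Fin d → Set Ω := fun j => h j ⁻¹' badSet with hBad
  -- deterministic part
  have hdet : ∀ ω, ω ∉ ⋂ j, Bad j →
      cmEstimate hd (fun j => h j ω) y i ≤ y i + η * B := by
    intro ω hω
    rw [Set.mem_iInter] at hω
    push_neg at hω
    obtain ⟨j, hj⟩ := hω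
    have hng : ¬ ((∃ i' ∈ T.erase i, h j ω i' = h j ω i) ∨
        η * B < ∑ i' ∈ R.filter (fun i' => h j ω i' = h j ω i), y i') := hj
    push_neg at hng
    obtain ⟨hheavy, htail⟩ := hng
    have hsk : cmSketch (fun j => h j ω) y j (h j ω i) ≤ y i + η * B := by
      unfold cmSketch
      have hiS : i ∈ Finset.univ.filter (fun i' => h j ω i' = h j ω i) := by simp
      rw [← Finset.sum_erase_add _ _ hiS]
      have hsub : (Finset.univ.filter (fun i' => h j ω i' = h j ω i)).erase i
          ⊆ R.filter (fun i' => h j ω i' = h j ω i) := by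
        intro a ha
        simp only [Finset.mem_erase, Finset.mem_filter, Finset.mem_univ, true_and, hR] at ha ⊢
        obtain ⟨hai, hcol⟩ := ha
        refine ⟨⟨?_, hai⟩, hcol⟩
        intro haT
        exact hheavy a (Finset.mem_erase.2 ⟨hai, haT⟩) hcol
      have := Finset.sum_le_sum_of_subset_of_nonneg hsub (fun a _ _ => hy a)
      linarith [htail, this]
    calc cmEstimate hd (fun j => h j ω) y i
        ≤ cmSketch (fun j => h j ω) y j (h j ω i) :=
          Finset.inf'_le _ (Finset.mem_univ j)
      _ ≤ y i + η * B := hsk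
  have hsubset : (⋂ j, Bad j)ᶜ ⊆
      {ω | cmEstimate hd (fun j => h j ω) y i ≤ y i + η * B} :=
    fun ω hω => hdet ω hω
  -- measurability
  have hbadmeas : MeasurableSet badSet := (Set.toFinite badSet).measurableSet
  have hBadmeas : ∀ j, MeasurableSet (Bad j) := fun j => (hmeas j) hbadmeas
  -- independence
  have hprod : ℙ (⋂ j, Bad j) = ∏ j, ℙ (Bad j) :=
    hindep.meas_iInter (fun j => ⟨badSet, hbadmeas, rfl⟩)
  -- per-row bound
  have hrow : ∀ j, ℙ (Bad j) ≤ ENNReal.ofReal (1/3 + 1/Real.exp 1) := by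
    intro j
    set A1 : Set Ω := h j ⁻¹' {g | ∃ i' ∈ T.erase i, g i' = g i} with hA1
    set A2 : Set Ω := h j ⁻¹' {g | η * B < ∑ i' ∈ R.filter (fun i' => g i' = g i), y i'}
      with hA2
    have hBadUnion : Bad j = A1 ∪ A2 := by
      rw [hBad, hA1, hA2, ← Set.preimage_union]
      rfl
    have hA1bound : ℙ A1 ≤ 1/3 := by
      have hA1U : A1 = ⋃ i' ∈ T.erase i, {ω | h j ω i' = h j ω i} := by
        ext ω; simp [hA1]
      rw [hA1U]
      refine (measure_biUnion_finset_le _ _).trans ?_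
      have hterm : ∀ i' ∈ T.erase i, ℙ {ω | h j ω i' = h j ω i} ≤ 1/(w:ℝ≥0∞) :=
        fun i' hi' => hpair j i' i (Finset.mem_erase.1 hi').1
      refine (Finset.sum_le_card_nsmul _ _ _ hterm).trans ?_
      rw [nsmul_eq_mul]
      have hcard : ((T.erase i).card : ℝ≥0∞) ≤ (k : ℝ≥0∞) := by
        have : (T.erase i).card ≤ k := hTcard ▸ Finset.card_erase_le.trans le_rfl
        exact_mod_cast this
      refine (mul_le_mul_left hcard _).trans ?_
      rw [mul_one_div]
      rw [ENNReal.div_le_iff (by exact_mod_cast hw.ne' : (w:ℝ≥0∞) ≠ 0)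
        (by simp : (w:ℝ≥0∞) ≠ ⊤)]
      calc (k:ℝ≥0∞) = 1/3 * (3 * (k:ℝ≥0∞)) := by
            rw [← mul_assoc, ENNReal.div_mul_cancel (by norm_num) (by norm_num), one_mul]
        _ ≤ 1/3 * (w:ℝ≥0∞) := mul_le_mul_right (by exact_mod_cast hw3k) _
    have hA2bound : ℙ A2 ≤ ENNReal.ofReal (1/Real.exp 1) := by
      set E : Fin n → Set Ω := fun i' => {ω | h j ω i' = h j ω i} with hE
      have hEmeas : ∀ i', MeasurableSet (E i') := fun i' =>
        measurableSet_eq_fun ((measurable_pi_apply i').comp (hmeas j))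
          ((measurable_pi_apply i).comp (hmeas j))
      set f : Ω → ℝ≥0∞ :=
        fun ω => ∑ i' ∈ R, (E i').indicator (fun _ => ENNReal.ofReal (y i')) ω with hf
      have hfmeas : Measurable f :=
        Finset.measurable_sum _ (fun i' _ => (measurable_const.indicator (hEmeas i')))
      have hf_int : ∫⁻ ω, f ω ∂ℙ = ∑ i' ∈ R, ENNReal.ofReal (y i') * ℙ (E i') := by
        simp only [hf]
        rw [lintegral_finset_sum _ (fun i' _ => measurable_const.indicator (hEmeas i'))]
        exact Finset.sum_congr rfl fun i' _ => lintegral_indicator_const (hEmeas i') _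
      have hsub2 : A2 ⊆ {ω | ENNReal.ofReal (η * B) ≤ f ω} := by
        intro ω hω
        simp only [hA2, Set.mem_preimage, Set.mem_setOf_eq] at hω
        have hfω : f ω
            = ENNReal.ofReal (∑ i' ∈ R.filter (fun i' => h j ω i' = h j ω i), y i') := by
          simp only [hf, Set.indicator_apply, hE, Set.mem_setOf_eq]
          rw [← Finset.sum_filter]
          exact (ENNReal.ofReal_sum_of_nonneg (fun a _ => hy a)).symm
        rw [Set.mem_setOf_eq, hfω]
        exact ENNReal.ofReal_le_ofReal hω.le
      have hmarkov := mul_meas_ge_le_lintegral₀ (μ := ℙ) hfmeas.aemeasurable (ENNReal.ofReal (η * B))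
      have hRsub : ∑ i' ∈ R, y i' ≤ B := by
        refine le_trans ?_ h1
        refine Finset.sum_le_sum_of_subset_of_nonneg ?_ (fun a _ _ => hy a)
        intro a ha
        simp only [hR, Finset.mem_filter, Finset.mem_univ, true_and] at ha ⊢
        exact ha.1
      have hintle : ∫⁻ ω, f ω ∂ℙ ≤ ENNReal.ofReal B / w := by
        rw [hf_int]
        calc ∑ i' ∈ R, ENNReal.ofReal (y i') * ℙ (E i')
            ≤ ∑ i' ∈ R, ENNReal.ofReal (y i') * (1/(w:ℝ≥0∞)) := by
              refine Finset.sum_le_sum fun i' hi' => mul_le_mul_right ?_ _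
              have hne : i' ≠ i := (Finset.mem_filter.1 hi').2.2
              exact hpair j i' i hne
          _ = (∑ i' ∈ R, ENNReal.ofReal (y i')) * (1/(w:ℝ≥0∞)) := by
              rw [Finset.sum_mul]
          _ = ENNReal.ofReal (∑ i' ∈ R, y i') * (1/(w:ℝ≥0∞)) := by
              rw [ENNReal.ofReal_sum_of_nonneg (fun a _ => hy a)]
          _ ≤ ENNReal.ofReal B * (1/(w:ℝ≥0∞)) :=
              mul_le_mul_left (ENNReal.ofReal_le_ofReal hRsub) _
          _ = ENNReal.ofReal B / w := by rw [mul_one_div]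
      have hepos := Real.exp_pos 1
      have hexp : Real.exp 1 ≤ η * w := by
        rw [div_le_iff₀ hη] at hwη
        linarith [hwη, mul_comm (w:ℝ) η]
      have hkey : ENNReal.ofReal B / w
          ≤ ENNReal.ofReal (1/Real.exp 1) * ENNReal.ofReal (η * B) := by
        rw [ENNReal.div_le_iff (by exact_mod_cast hw.ne' : (w:ℝ≥0∞) ≠ 0)
          (by simp : (w:ℝ≥0∞) ≠ ⊤)]
        rw [← ENNReal.ofReal_mul (by positivity : (0:ℝ) ≤ 1/Real.exp 1),
          ← ENNReal.ofReal_natCast w,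
          ← ENNReal.ofReal_mul (mul_nonneg (by positivity) hηB.le)]
        apply ENNReal.ofReal_le_ofReal
        have heq : 1/Real.exp 1 * (η*B) * (w:ℝ) = B * (η*(w:ℝ)) / Real.exp 1 := by ring
        rw [heq, le_div_iff₀ hepos]
        exact mul_le_mul_of_nonneg_left hexp hB.le
      have hfinal : ℙ A2 * ENNReal.ofReal (η * B)
          ≤ ENNReal.ofReal (1/Real.exp 1) * ENNReal.ofReal (η * B) := by
        calc ℙ A2 * ENNReal.ofReal (η * B) = ENNReal.ofReal (η * B) * ℙ A2 := mul_comm _ _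
          _ ≤ ENNReal.ofReal (η * B) * ℙ {ω | ENNReal.ofReal (η * B) ≤ f ω} :=
              mul_le_mul_right (measure_mono hsub2) _
          _ ≤ ∫⁻ ω, f ω ∂ℙ := hmarkov
          _ ≤ ENNReal.ofReal B / w := hintle
          _ ≤ _ := hkey
      exact (ENNReal.mul_le_mul_iff_left
        (by simp only [ne_eq, ENNReal.ofReal_eq_zero, not_le]; exact hηB)
        ENNReal.ofReal_ne_top).mp hfinal
    calc ℙ (Bad j) ≤ ℙ A1 + ℙ A2 := hBadUnion ▸ measure_union_le A1 A2
      _ ≤ 1/3 + ENNReal.ofReal (1/Real.exp 1) := add_le_add hA1bound hA2bound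
      _ = ENNReal.ofReal (1/3 + 1/Real.exp 1) := by
          have h13 : (1/3 : ℝ≥0∞) = ENNReal.ofReal (1/3) := by
            rw [ENNReal.ofReal_div_of_pos (by norm_num : (0:ℝ) < 3)]
            simp
          rw [ENNReal.ofReal_add (by norm_num) (by positivity : (0:ℝ) ≤ 1/Real.exp 1), ← h13]
  -- finish
  have hInter : ℙ (⋂ j, Bad j) ≤ ENNReal.ofReal ((1/3 + 1/Real.exp 1) ^ d) := by
    rw [hprod, ENNReal.ofReal_pow (by positivity)]
    calc ∏ j, ℙ (Bad j) ≤ ∏ _j : Fin d, ENNReal.ofReal (1/3 + 1/Real.exp 1) :=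
          Finset.prod_le_prod' fun j _ => hrow j
      _ = ENNReal.ofReal (1/3 + 1/Real.exp 1) ^ d := by
          rw [Finset.prod_const, Finset.card_univ, Fintype.card_fin]
  calc (1 : ℝ≥0∞) - ENNReal.ofReal ((1/3 + 1/Real.exp 1) ^ d)
      ≤ 1 - ℙ (⋂ j, Bad j) := tsub_le_tsub_left hInter 1
    _ = ℙ ((⋂ j, Bad j)ᶜ) := (prob_compl_eq_one_sub (MeasurableSet.iInter hBadmeas)).symm
    _ ≤ ℙ {ω | cmEstimate hd (fun j => h j ω) y i ≤ y i + η * B} := measure_mono hsubset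
end
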